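/- Let U ⊆ ℝ^d be an open convex set and ξ : ℝ^d → ℝ ∪ {+∞} a convex function that is finite and differentiable on U. For x ∈ dom ξ and y ∈ U define the Bregman divergence D(x, y) = ξ(x) − ξ(y) − ⟨∇ξ(y), x − y⟩. Let f : ℝ^d → ℝ ∪ {+∞} be a proper convex function, τ > 0, x̄ ∈ U, and suppose x⁺ ∈ U is a minimizer over ℝ^d of x ↦ f(x) + τ^{-1} D(x, x̄). Then for every x ∈ dom ξ ∩ dom f it holds τ (f(x⁺) − f(x)) ≤ D(x, x̄) − D(x, x⁺) − D(x⁺, x̄). -/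

import Mathlib

open scoped RealInnerProductSpace

/-- **Three-point inequality of Chen and Teboulle (1993).**
Let `ξ` be convex (with domain `domξ`), finite and differentiable on an open
convex set `U ⊆ domξ`, with Bregman divergence
`D x y = ξ x − ξ y − ⟪∇ξ y, x − y⟫`. If `x⁺ ∈ U` minimizes
`x ↦ f x + τ⁻¹ D x x̄` (with `f` proper convex with domain `domf`), then for all
`x ∈ domξ ∩ domf` we have `τ (f x⁺ − f x) ≤ D x x̄ − D x x⁺ − D x⁺ x̄`. -/
theorem chen_teboulle_three_point
    (d : ℕ) (U domξ domf : Set (EuclideanSpace ℝ (Fin d)))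
    (ξ f : EuclideanSpace ℝ (Fin d) → ℝ)
    (g : EuclideanSpace ℝ (Fin d) → EuclideanSpace ℝ (Fin d))
    (hUopen : IsOpen U) (hUconv : Convex ℝ U) (hUsub : U ⊆ domξ)
    (hξ : ConvexOn ℝ domξ ξ)
    (hgrad : ∀ y ∈ U, HasGradientAt ξ (g y) y)
    (hfne : domf.Nonempty) (hf : ConvexOn ℝ domf f)
    (D : EuclideanSpace ℝ (Fin d) → EuclideanSpace ℝ (Fin d) → ℝ)
    (hD : ∀ x y, D x y = ξ x - ξ y - ⟪g y, x - y⟫)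
    (τ : ℝ) (hτ : 0 < τ)
    (xb xp : EuclideanSpace ℝ (Fin d)) (hxb : xb ∈ U) (hxp : xp ∈ U)
    (hxpf : xp ∈ domf)
    (hmin : ∀ x ∈ domf ∩ domξ, f xp + τ⁻¹ * D xp xb ≤ f x + τ⁻¹ * D x xb) :
    ∀ x ∈ domξ ∩ domf, τ * (f xp - f x) ≤ D x xb - D x xp - D xp xb := by
  intro x hx
  obtain ⟨hxξ, hxf⟩ := hx
  set v : EuclideanSpace ℝ (Fin d) := x - xp with hv
  -- derivative of φ t = ξ (xp + t • v) at 0 is ⟪g xp, v⟫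
  have hφ : HasDerivAt (fun t : ℝ => ξ (xp + t • v)) ⟪g xp, v⟫ 0 := by
    have h1 := (hgrad xp hxp).hasFDerivAt
    have hline : HasDerivAt (fun t : ℝ => xp + t • v) v 0 := by
      simpa using ((hasDerivAt_id (0:ℝ)).smul_const v).const_add xp
    have h1' : HasFDerivAt ξ
        ((InnerProductSpace.toDual ℝ (EuclideanSpace ℝ (Fin d))) (g xp))
        (xp + (0:ℝ) • v) := by simpa using h1
    have h2 := h1'.comp_hasDerivAt 0 hline
    simp at h2
    exact h2
  have hslope : Filter.Tendsto (slope (fun t : ℝ => ξ (xp + t • v)) 0)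
      (nhdsWithin 0 (Set.Ioi 0)) (nhds ⟪g xp, v⟫) :=
    (hasDerivAt_iff_tendsto_slope.mp hφ).mono_left
      (nhdsWithin_mono _ (fun t ht => ne_of_gt ht))
  have key : τ * (f xp - f x) + ⟪g xb, v⟫ ≤ ⟪g xp, v⟫ := by
    refine ge_of_tendsto hslope ?_
    filter_upwards [Ioo_mem_nhdsGT_of_mem (Set.left_mem_Ico.mpr one_pos)] with t ht
    obtain ⟨ht0, ht1⟩ := ht
    have hxt : xp + t • v = (1 - t) • xp + t • x := by
      rw [hv]; module
    have hmemf : (1 - t) • xp + t • x ∈ domf :=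
      hf.1 hxpf hxf (by linarith) ht0.le (by ring)
    have hmemξ : (1 - t) • xp + t • x ∈ domξ :=
      hξ.1 (hUsub hxp) hxξ (by linarith) ht0.le (by ring)
    have hconv : f ((1 - t) • xp + t • x) ≤ (1 - t) * f xp + t * f x :=
      hf.2 hxpf hxf (by linarith) ht0.le (by ring)
    have hm := hmin _ ⟨hmemf, hmemξ⟩
    have hDxt : D ((1 - t) • xp + t • x) xb
        = ξ ((1 - t) • xp + t • x) - ξ xb - (⟪g xb, xp - xb⟫ + t * ⟪g xb, v⟫) := by
      rw [hD]
      have : (1 - t) • xp + t • x - xb = (xp - xb) + t • v := by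
        rw [hv]; module
      rw [this, inner_add_right, real_inner_smul_right]
    have hDxp : D xp xb = ξ xp - ξ xb - ⟪g xb, xp - xb⟫ := hD xp xb
    have hsl : slope (fun t : ℝ => ξ (xp + t • v)) 0 t
        = (ξ ((1 - t) • xp + t • x) - ξ xp) / t := by
      simp [slope, hxt, div_eq_inv_mul]
    rw [hsl]
    rw [hDxt, hDxp] at hm
    rw [div_eq_inv_mul]
    have hti : (0:ℝ) < t⁻¹ := inv_pos.mpr ht0
    have htne : t ≠ 0 := ne_of_gt ht0
    have hτne : τ ≠ 0 := ne_of_gt hτ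
    have hττ : τ * τ⁻¹ = 1 := mul_inv_cancel₀ hτne
    have h3 : t * (f xp - f x) ≤ τ⁻¹ * (ξ ((1 - t) • xp + t • x) - ξ xp - t * ⟪g xb, v⟫) := by
      nlinarith [hm, hconv]
    have h5 : τ * t * (f xp - f x) ≤ ξ ((1 - t) • xp + t • x) - ξ xp - t * ⟪g xb, v⟫ := by
      have h := mul_le_mul_of_nonneg_left h3 hτ.le
      rwa [← mul_assoc, ← mul_assoc, hττ, one_mul] at h
    have h6 := mul_le_mul_of_nonneg_left h5 hti.le
    have e1 : t⁻¹ * (τ * t * (f xp - f x)) = τ * (f xp - f x) := by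
      field_simp
    have e2 : t⁻¹ * (ξ ((1 - t) • xp + t • x) - ξ xp - t * ⟪g xb, v⟫)
        = t⁻¹ * (ξ ((1 - t) • xp + t • x) - ξ xp) - ⟪g xb, v⟫ := by
      rw [mul_sub, ← mul_assoc, inv_mul_cancel₀ htne, one_mul]
    rw [e1, e2] at h6
    linarith
  have hexp : D x xb - D x xp - D xp xb = ⟪g xp, v⟫ - ⟪g xb, v⟫ := by
    simp only [hD, hv, inner_sub_right]
    ring
  linarith [key, hexp.ge, hexp.le]
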